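/- Let V = ℂ³ with basis {u | v, h} (u even; v, h odd), bracket [u,v] = h (and [v,u] = -h, all others zero). Suppose α(u) = μ₀ u, α(v) = μ₁₁ v + μ₂₁ h, α(h) = μ₀μ₁₁ h with μ₂₁ ≠ 0, μ₀ ≠ 1, and μ₁₁ ≠ 0. Then there exists an even linear automorphism φ of V with φ([x,y]) = [φ(x),φ(y)] for all x,y such that φ ∘ α ∘ φ⁻¹ is diagonal: (φαφ⁻¹)(u) = μ₀ u, (φαφ⁻¹)(v) = μ₁₁ v, (φαφ⁻¹)(h) = μ₀μ₁₁ h. -/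

import Mathlib

namespace Stmt2

/-- V = ℂ³ with basis u = e₀ (even), v = e₁, h = e₂ (odd). -/
abbrev V : Type := Fin 3 → ℂ

/-- super bracket: [u,v] = h = -[v,u], all other brackets of basis elements zero. -/
def br (x y : V) : V := ![0, 0, x 0 * y 1 - x 1 * y 0]

/-- α(u)=μ₀u, α(v)=μ₁₁v+μ₂₁h, α(h)=μ₀μ₁₁h. -/
def al (μ0 μ11 μ21 : ℂ) (x : V) : V :=
  ![μ0 * x 0, μ11 * x 1, μ21 * x 1 + μ0 * μ11 * x 2]

/-- the diagonal map diag(μ₀, μ₁₁, μ₀μ₁₁). -/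
def ad (μ0 μ11 : ℂ) (x : V) : V := ![μ0 * x 0, μ11 * x 1, μ0 * μ11 * x 2]

def IsLin (f : V → V) : Prop := ∀ (c : ℂ) (x y : V), f (c • x + y) = c • f x + f y

/-- even map: preserves the grading (coord 0 even, coords 1,2 odd). -/
def IsEven (f : V → V) : Prop :=
  ∀ x : V, ((x 1 = 0 ∧ x 2 = 0) → ((f x) 1 = 0 ∧ (f x) 2 = 0)) ∧ (x 0 = 0 → (f x) 0 = 0)

theorem stmt2 (μ0 μ11 μ21 : ℂ) (h21 : μ21 ≠ 0) (h0 : μ0 ≠ 1) (h11 : μ11 ≠ 0) :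
    ∃ φ : V → V, IsLin φ ∧ IsEven φ ∧ Function.Bijective φ ∧
      (∀ x y : V, φ (br x y) = br (φ x) (φ y)) ∧
      (∀ x : V, φ (al μ0 μ11 μ21 x) = ad μ0 μ11 (φ x)) := by
  set c : ℂ := -μ21 / ((1 - μ0) * μ11) with hc
  have h10 : (1 : ℂ) - μ0 ≠ 0 := sub_ne_zero.mpr (Ne.symm h0)
  refine ⟨fun x => ![x 0, x 1, c * x 1 + x 2], ?_, ?_, ?_, ?_, ?_⟩
  · intro k x y
    funext i
    fin_cases i <;> simp [Matrix.cons_val_zero, Matrix.cons_val_one] <;> ring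
  · intro x
    refine ⟨fun ⟨h1, h2⟩ => ⟨by simp [h1], by simp [h1, h2]⟩, fun h => by simp [h]⟩
  · constructor
    · intro x y hxy
      have h0' := congrFun hxy 0
      have h1' := congrFun hxy 1
      have h2' := congrFun hxy 2
      simp at h0' h1' h2'
      funext i
      fin_cases i
      · exact h0'
      · exact h1'
      · simpa [h1'] using h2'
    · intro y
      refine ⟨![y 0, y 1, -c * y 1 + y 2], ?_⟩
      funext i
      fin_cases i <;> simp <;> ring
  · intro x y
    funext i
    fin_cases i <;> simp [br] <;> ring
  · intro x
    funext i
    fin_cases i <;> simp [al, ad]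
    rw [hc]
    field_simp [hc]
    ring
end Stmt2
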